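/- For every Witt vector x in the truncated Witt ring W_{n+1}(R) of a commutative ring R, the Frobenius F(x) ∈ W_n(R) satisfies F(x) ≡ r(x)^p (mod p·W_n(R)), where r : W_{n+1}(R) → W_n(R) is the truncation (restriction) map. -/

import Mathlib

open WittVector

section Aux

variable {p : ℕ} [hp : Fact p.Prime] {R : Type*} [CommRing R]

local notation "𝕎" => WittVector p

private theorem frob_teich_aux₁ {S : Type*} (x : MvPolynomial S ℚ) :
    frobenius (teichmuller p x) = teichmuller p (x ^ p) := by
  apply (ghostMap.bijective_of_invertible p (MvPolynomial S ℚ)).1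
  funext n
  rw [ghostMap_apply, ghostMap_apply, ghostComponent_frobenius,
    ghostComponent_teichmuller, ghostComponent_teichmuller, ← pow_mul, ← pow_succ']

private theorem frob_teich_aux₂ {S : Type*} (x : MvPolynomial S ℤ) :
    frobenius (teichmuller p x) = teichmuller p (x ^ p) := by
  refine map_injective (MvPolynomial.map (Int.castRingHom ℚ))
    (MvPolynomial.map_injective _ Int.cast_injective) ?_
  rw [map_teichmuller, (frobenius_isPoly p).map, map_teichmuller, frob_teich_aux₁]
  simp only [map_pow]

theorem frobenius_teichmuller' (r : R) :
    frobenius (teichmuller p r) = teichmuller p r ^ p := by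
  rcases MvPolynomial.counit_surjective R r with ⟨x, rfl⟩
  calc frobenius (teichmuller p ((MvPolynomial.counit R) x))
      = frobenius (map (MvPolynomial.counit R) (teichmuller p x)) := by
        rw [map_teichmuller]
    _ = map (MvPolynomial.counit R) (frobenius (teichmuller p x)) := by
        rw [(frobenius_isPoly p).map]
    _ = teichmuller p ((MvPolynomial.counit R) (x ^ p)) := by
        rw [frob_teich_aux₂, map_teichmuller]
    _ = teichmuller p ((MvPolynomial.counit R) x) ^ p := by
        simp only [map_pow]

theorem verschiebung_pow_succ (b : 𝕎 R) (k : ℕ) :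
    (verschiebung b) ^ (k + 1) = (p : 𝕎 R) ^ k * verschiebung (b ^ (k + 1)) := by
  induction k with
  | zero => simp
  | succ k ih =>
    have hmul : verschiebung (b ^ (k + 1)) * verschiebung b
        = (p : 𝕎 R) * verschiebung (b ^ (k + 2)) := by
      rw [← verschiebung_mul_frobenius (b ^ (k + 1)) (verschiebung b),
        frobenius_verschiebung]
      have : b ^ (k + 1) * (b * (p : 𝕎 R)) = p • (b ^ (k + 2)) := by
        rw [nsmul_eq_mul]; ring
      rw [this, AddMonoidHom.map_nsmul, nsmul_eq_mul]
    calc (verschiebung b) ^ (k + 2)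
        = (verschiebung b) ^ (k + 1) * verschiebung b := by ring
      _ = (p : 𝕎 R) ^ k * (verschiebung (b ^ (k + 1)) * verschiebung b) := by
          rw [ih]; ring
      _ = (p : 𝕎 R) ^ (k + 1) * verschiebung (b ^ (k + 2)) := by
          rw [hmul]; ring

theorem exists_verschiebung_eq (z : 𝕎 R) (h : z.coeff 0 = 0) :
    ∃ w : 𝕎 R, verschiebung w = z := by
  refine ⟨WittVector.mk p fun i => z.coeff (i + 1), ?_⟩
  ext n
  cases n with
  | zero => rw [verschiebung_coeff_zero, h]
  | succ n => rw [verschiebung_coeff_succ, coeff_mk]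

/-- The δ-ring property of Witt vectors:
`frobenius X ≡ X ^ p` modulo `p`. -/
theorem frobenius_eq_pow_add_p_mul (X : 𝕎 R) :
    ∃ Y : 𝕎 R, frobenius X = X ^ p + (p : 𝕎 R) * Y := by
  have h0 : (X - teichmuller p (X.coeff 0)).coeff 0 = 0 := by
    have h := add_coeff_zero (X - teichmuller p (X.coeff 0)) (teichmuller p (X.coeff 0))
    rw [sub_add_cancel, teichmuller_coeff_zero] at h
    linear_combination -h
  obtain ⟨B, hB⟩ := exists_verschiebung_eq _ h0
  have hX : X = teichmuller p (X.coeff 0) + verschiebung B := by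
    rw [hB]; ring
  set T := teichmuller p (X.coeff 0) with hT
  -- binomial expansion
  obtain ⟨r₀, hr₀⟩ := Commute.exists_add_pow_prime_eq hp.out
    (Commute.all T (verschiebung B))
  obtain ⟨r, hr⟩ : ∃ r : 𝕎 R, (T + verschiebung B) ^ p
      = T ^ p + verschiebung B ^ p + (p : 𝕎 R) * r :=
    ⟨T * verschiebung B * r₀, by rw [hr₀]; ring⟩
  -- (V B) ^ p = p ^ (p - 1) * V (B ^ p)
  have hp1 : p - 1 + 1 = p := Nat.succ_pred_eq_of_pos hp.out.pos
  have hVp := verschiebung_pow_succ B (p - 1)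
  rw [hp1] at hVp
  have hp2 : p - 1 = p - 2 + 1 := by have := hp.out.two_le; omega
  refine ⟨B - (p : 𝕎 R) ^ (p - 2) * verschiebung (B ^ p) - r, ?_⟩
  have hF : frobenius X = T ^ p + (p : 𝕎 R) * B := by
    conv_lhs => rw [hX]
    rw [map_add, frobenius_verschiebung, hT, frobenius_teichmuller']
    ring
  have hXp : X ^ p = T ^ p + (p : 𝕎 R) ^ (p - 1) * verschiebung (B ^ p)
      + (p : 𝕎 R) * r := by
    conv_lhs => rw [hX]
    rw [hr, hVp]
  rw [hF, hXp, hp2, pow_succ]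
  ring

end Aux

/-- For every truncated Witt vector `x ∈ W_{n+1}(R)`, the Frobenius
`F(x) ∈ W_n(R)` is congruent to `r(x)^p` modulo `p`, where `r` is the truncation
map `W_{n+1}(R) → W_n(R)`.  Here `F` and `r` are expressed via an arbitrary lift
`X ∈ W(R)` of `x`, using that `W_n` is a quotient of `W`. -/
theorem truncated_frobenius_congruence (p : ℕ) [hp : Fact p.Prime]
    (R : Type*) [CommRing R] (n : ℕ) :
    ∀ x : TruncatedWittVector p (n + 1) R, ∀ X : WittVector p R,
      WittVector.truncate (n + 1) X = x →
      ∃ y : TruncatedWittVector p n R,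
        WittVector.truncate n (WittVector.frobenius X) =
          (TruncatedWittVector.truncate (Nat.le_succ n) x) ^ p +
            (p : TruncatedWittVector p n R) * y := by
  intro x X hX
  obtain ⟨Y, hY⟩ := frobenius_eq_pow_add_p_mul X
  refine ⟨WittVector.truncate n Y, ?_⟩
  have := congrArg (WittVector.truncate (p := p) (R := R) n) hY
  rw [map_add, map_mul, map_pow, map_natCast] at this
  rw [this, ← hX, TruncatedWittVector.truncate_wittVector_truncate]
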